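/- For natural numbers m, j and complex numbers b, c such that b - c is not an integer, ∑_{k=0}^{m} (-m)_k / ((b - c - j + k) · k!) = (m! / (b-c)_{m+1}) · (c - b - m)_j / (1 + c - b)_j. -/

import Mathlib

open Complex Finset

/-- Pochhammer symbol `(x)_k = x (x+1) ⋯ (x+k-1)`. -/
noncomputable def poch (x : ℂ) (k : ℕ) : ℂ := ∏ i ∈ Finset.range k, (x + i)

/-- Beta function `B(x,y) = Γ(x) Γ(y) / Γ(x+y)`. -/
noncomputable def cBeta (x y : ℂ) : ℂ :=
  Complex.Gamma x * Complex.Gamma y / Complex.Gamma (x + y)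

lemma poch_succ (x : ℂ) (k : ℕ) : poch x (k + 1) = poch x k * (x + k) := by
  simp [poch, Finset.prod_range_succ]

lemma poch_succ' (x : ℂ) (k : ℕ) : poch x (k + 1) = x * poch (x + 1) k := by
  unfold poch
  rw [Finset.prod_range_succ', mul_comm]
  congr 1
  · norm_num
  · apply Finset.prod_congr rfl; intro i _; push_cast; ring

lemma poch_add (x : ℂ) (a b : ℕ) : poch x (a + b) = poch x a * poch (x + a) b := by
  rw [poch, Finset.prod_range_add]
  congr 1
  apply Finset.prod_congr rfl
  intro i _
  push_cast
  ring

/-- Key partial fraction identity. -/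
lemma key_sum : ∀ (m : ℕ) (x : ℂ), (∀ k ∈ Finset.range (m + 1), x + k ≠ 0) →
    ∑ k ∈ Finset.range (m + 1), (-1 : ℂ) ^ k * (m.choose k : ℂ) / (x + k) =
      (m.factorial : ℂ) / ∏ i ∈ Finset.range (m + 1), (x + i) := by
  intro m
  induction m with
  | zero => intro x hx; simp
  | succ m ih =>
    intro x hx
    have hx0 : x ≠ 0 := by simpa using hx 0 (by simp)
    have hxk : ∀ k ∈ Finset.range (m + 1), x + k ≠ 0 := by
      intro k hk
      exact hx k (by simp at hk ⊢; omega)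
    have hxk1 : ∀ k ∈ Finset.range (m + 1), (x + 1) + k ≠ 0 := by
      intro k hk
      have := hx (k + 1) (by simp at hk ⊢; omega)
      push_cast at this
      intro hc; exact this (by linear_combination hc)
    have h0 := ih x hxk
    have h1 := ih (x + 1) hxk1
    rw [Finset.sum_range_succ']
    have hsplit : ∀ k : ℕ, (-1 : ℂ) ^ (k + 1) * ((m + 1).choose (k + 1) : ℂ) / (x + ((k : ℕ) + 1 : ℕ)) =
        (-((-1 : ℂ) ^ k * (m.choose k : ℂ) / ((x + 1) + k))) +
        ((-1 : ℂ) ^ (k + 1) * (m.choose (k + 1) : ℂ) / (x + ((k : ℕ) + 1 : ℕ))) := by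
      intro k
      rw [Nat.choose_succ_succ]
      push_cast
      have hd : x + ((k : ℂ) + 1) = x + 1 + k := by ring
      rw [hd, mul_add, add_div]
      ring
    simp only [hsplit]
    rw [Finset.sum_add_distrib]
    have hA : ∑ k ∈ Finset.range (m + 1), (-((-1 : ℂ) ^ k * (m.choose k : ℂ) / ((x + 1) + k))) =
        -((m.factorial : ℂ) / ∏ i ∈ Finset.range (m + 1), ((x + 1) + i)) := by
      rw [← h1, ← Finset.sum_neg_distrib]
    have hB : (∑ k ∈ Finset.range (m + 1),
          (-1 : ℂ) ^ (k + 1) * (m.choose (k + 1) : ℂ) / (x + ((k : ℕ) + 1 : ℕ))) +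
          (-1 : ℂ) ^ 0 * (((m + 1).choose 0 : ℕ) : ℂ) / (x + ((0 : ℕ) : ℂ)) =
        (m.factorial : ℂ) / ∏ i ∈ Finset.range (m + 1), (x + i) := by
      rw [Finset.sum_range_succ]
      have hz : ((-1 : ℂ) ^ (m + 1) * (m.choose (m + 1) : ℂ) / (x + ((m : ℕ) + 1 : ℕ))) = 0 := by
        simp [Nat.choose_succ_self]
      rw [hz, add_zero, ← h0, Finset.sum_range_succ']
      norm_num
    rw [add_assoc]
    rw [hB, hA]
    have hP0 : (∏ i ∈ Finset.range (m + 1), (x + i)) ≠ 0 := Finset.prod_ne_zero_iff.mpr hxk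
    have hP1 : (∏ i ∈ Finset.range (m + 1), ((x + 1) + i)) ≠ 0 := Finset.prod_ne_zero_iff.mpr hxk1
    have hQ1 : ∏ i ∈ Finset.range (m + 2), (x + i) =
        x * ∏ i ∈ Finset.range (m + 1), ((x + 1) + i) := by
      rw [Finset.prod_range_succ', mul_comm]
      congr 1
      · norm_num
      · apply Finset.prod_congr rfl; intro i _; push_cast; ring
    have hQ2 : ∏ i ∈ Finset.range (m + 2), (x + i) =
        (x + (m + 1)) * ∏ i ∈ Finset.range (m + 1), (x + i) := by
      rw [Finset.prod_range_succ]; push_cast; ring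
    have hcast : ∏ i ∈ Finset.range (m + 1 + 1), (x + i) = ∏ i ∈ Finset.range (m + 2), (x + i) := rfl
    have hxm : x + ((m : ℂ) + 1) ≠ 0 := by
      have := hx (m + 1) (by simp)
      push_cast at this; exact this
    have hR : x * (∏ i ∈ Finset.range (m + 1), ((x + 1) + i)) =
        (x + ((m : ℂ) + 1)) * ∏ i ∈ Finset.range (m + 1), (x + i) := by
      rw [← hQ1, hQ2]
    rw [hcast, hQ2, Nat.factorial_succ]
    push_cast
    field_simp
    linear_combination (m.factorial : ℂ) * hR

lemma refl1 (u : ℂ) (m : ℕ) : ∀ j : ℕ, poch (-u - m) j = (-1) ^ j * poch (u + m + 1 - j) j := by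
  intro j
  induction j with
  | zero => simp [poch]
  | succ j ih =>
    rw [poch_succ, ih]
    have h1 : poch (u + m + 1 - ((j : ℕ) + 1 : ℕ)) (j + 1) =
        (u + m + 1 - ((j : ℕ) + 1 : ℕ)) * poch (u + m + 1 - ((j : ℕ) + 1 : ℕ) + 1) j :=
      poch_succ' _ _
    rw [h1]
    have he : u + m + 1 - ((j : ℕ) + 1 : ℕ) + 1 = u + m + 1 - (j : ℕ) := by push_cast; ring
    rw [he]
    push_cast
    ring

lemma refl2 (u : ℂ) : ∀ j : ℕ, poch (1 - u) j = (-1) ^ j * poch (u - j) j := by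
  intro j
  induction j with
  | zero => simp [poch]
  | succ j ih =>
    rw [poch_succ, ih]
    have h1 : poch (u - ((j : ℕ) + 1 : ℕ)) (j + 1) =
        (u - ((j : ℕ) + 1 : ℕ)) * poch (u - ((j : ℕ) + 1 : ℕ) + 1) j :=
      poch_succ' _ _
    rw [h1]
    have he : u - ((j : ℕ) + 1 : ℕ) + 1 = u - (j : ℕ) := by push_cast; ring
    rw [he]
    push_cast
    ring

theorem inner_sum_karlsson (m j : ℕ) (b c : ℂ) (h : ∀ k : ℤ, b - c ≠ k) :
    ∑ k ∈ Finset.range (m + 1),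
        poch (-(m : ℂ)) k / ((b - c - j + k) * (Nat.factorial k : ℂ)) =
      ((Nat.factorial m : ℂ) / poch (b - c) (m + 1)) *
        (poch (c - b - m) j / poch (1 + c - b) j) := by
  have hne : ∀ z : ℤ, b - c + z ≠ 0 := by
    intro z hz
    exact h (-z) (by push_cast; linear_combination hz)
  -- step 1: rewrite each term of the sum
  have hterm : ∀ k ∈ Finset.range (m + 1),
      poch (-(m : ℂ)) k / ((b - c - j + k) * (Nat.factorial k : ℂ)) =
      (-1 : ℂ) ^ k * (m.choose k : ℂ) / ((b - c - j) + k) := by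
    intro k hk
    have hkm : k ≤ m := by simp at hk; omega
    have hpm : poch (-(m : ℂ)) k = (-1) ^ k * ((m.descFactorial k : ℕ) : ℂ) := by
      unfold poch
      calc ∏ i ∈ Finset.range k, (-(m : ℂ) + i)
          = ∏ i ∈ Finset.range k, ((-1) * ((m : ℂ) - i)) :=
            Finset.prod_congr rfl (fun i _ => by ring)
        _ = (-1) ^ k * ∏ i ∈ Finset.range k, ((m : ℂ) - i) := by
            rw [Finset.prod_mul_distrib, Finset.prod_const, Finset.card_range]
        _ = (-1) ^ k * ((m.descFactorial k : ℕ) : ℂ) := by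
            congr 1
            rw [Nat.descFactorial_eq_prod_range, Nat.cast_prod]
            apply Finset.prod_congr rfl
            intro i hi
            have : i ≤ m := by simp at hi; omega
            push_cast [Nat.cast_sub this]
            ring
    rw [hpm, Nat.descFactorial_eq_factorial_mul_choose]
    have hfac : ((k.factorial : ℕ) : ℂ) ≠ 0 := by
      exact_mod_cast Nat.cast_ne_zero.mpr k.factorial_ne_zero
    have hd : (b - c - j) + k ≠ 0 := by
      intro hc0
      exact hne ((k : ℤ) - (j : ℤ)) (by push_cast; linear_combination hc0)
    have hd' : b - c - j + k ≠ 0 := hd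
    push_cast
    field_simp
  rw [Finset.sum_congr rfl hterm]
  have hx : ∀ k ∈ Finset.range (m + 1), (b - c - j) + (k : ℂ) ≠ 0 := by
    intro k _ hc0
    exact hne ((k : ℤ) - (j : ℤ)) (by push_cast; linear_combination hc0)
  rw [key_sum m (b - c - j) hx]
  -- step 2: Pochhammer algebra
  set u : ℂ := b - c with hu
  have hcb1 : c - b - (m : ℂ) = -u - m := by rw [hu]; ring
  have hcb2 : 1 + c - b = 1 - u := by rw [hu]; ring
  rw [hcb1, hcb2, refl1 u m j, refl2 u j]
  have e1 : poch (u - j) ((m + 1) + j) = poch (u - j) (m + 1) * poch ((u - j) + ((m + 1 : ℕ) : ℂ)) j :=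
    poch_add _ _ _
  have e2 : poch (u - j) (j + (m + 1)) = poch (u - j) j * poch ((u - j) + ((j : ℕ) : ℂ)) (m + 1) :=
    poch_add _ _ _
  have hc1 : (u - (j : ℂ)) + ((m + 1 : ℕ) : ℂ) = u + m + 1 - j := by push_cast; ring
  have hc2 : (u - (j : ℂ)) + ((j : ℕ) : ℂ) = u := by push_cast; ring
  rw [hc1] at e1
  rw [hc2] at e2
  have hE : poch (u - j) (m + 1) * poch (u + m + 1 - j) j = poch (u - j) j * poch u (m + 1) := by
    rw [← e1, ← e2, add_comm (m + 1) j]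
  -- nonvanishing
  have hprod : ∀ (x : ℂ) (n : ℕ), (∀ i ∈ Finset.range n, x + i ≠ 0) → poch x n ≠ 0 :=
    fun x n hn => Finset.prod_ne_zero_iff.mpr hn
  have h1 : poch u (m + 1) ≠ 0 := by
    apply hprod; intro i _ hc0
    exact hne i (by push_cast; linear_combination hc0)
  have h2 : poch (u - j) (m + 1) ≠ 0 := by
    apply hprod; intro i _ hc0
    exact hne ((i : ℤ) - (j : ℤ)) (by push_cast; linear_combination hc0)
  have h3 : poch (u - j) j ≠ 0 := by
    apply hprod; intro i _ hc0
    exact hne ((i : ℤ) - (j : ℤ)) (by push_cast; linear_combination hc0)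
  have h4 : ((-1 : ℂ) ^ j) ≠ 0 := by
    exact pow_ne_zero _ (by norm_num)
  have hpoch_eq : ∏ i ∈ Finset.range (m + 1), ((u - j) + i) = poch (u - j) (m + 1) := rfl
  rw [hpoch_eq]
  rw [mul_div_mul_left _ _ h4]
  field_simp
  linear_combination (-(m.factorial : ℂ)) * hE
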